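/- There is no coalition logic (CL) formula equivalent to the FOCL sentence ∃x⟨x,x⟩¬p: there exist two two-agent CGSs G₁ and G₂ with a state s such that G₁,s and G₂,s satisfy the same CL formulas, G₁,s ⊨ ∃x⟨x,x⟩¬p, and G₂,s ⊭ ∃x⟨x,x⟩¬p. -/

import Mathlib

/-- Terms: variables or constants. -/
inductive Tm (C : Type) : Type
  | var : ℕ → Tm C
  | const : C → Tm C
deriving DecidableEq

/-- Formulas of first-order coalition logic over a signature ⟨n, C, Ap⟩. -/
inductive Form (n : ℕ) (C : Type) (Ap : Type) : Type
  | atom : Ap → Form n C Ap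
  | neg : Form n C Ap → Form n C Ap
  | and : Form n C Ap → Form n C Ap → Form n C Ap
  | box : (Fin n → Tm C) → Form n C Ap → Form n C Ap
  | all : ℕ → Form n C Ap → Form n C Ap

namespace Form

variable {n : ℕ} {C Ap : Type}

def imp (φ ψ : Form n C Ap) : Form n C Ap := .neg (.and φ (.neg ψ))
def iff (φ ψ : Form n C Ap) : Form n C Ap := .and (imp φ ψ) (imp ψ φ)
def ex (x : ℕ) (φ : Form n C Ap) : Form n C Ap := .neg (.all x (.neg φ))

open Classical in
/-- Substitution of a term for a variable. -/
noncomputable def substT (t : Tm C) (x : ℕ) : Form n C Ap → Form n C Ap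
  | .atom p => .atom p
  | .neg φ => .neg (substT t x φ)
  | .and φ ψ => .and (substT t x φ) (substT t x ψ)
  | .box ts φ => .box (fun i => if ts i = .var x then t else ts i) (substT t x φ)
  | .all y φ => if y = x then .all y φ else .all y (substT t x φ)

/-- Substitution of a constant for a variable. -/
noncomputable def subst (a : C) (x : ℕ) (φ : Form n C Ap) : Form n C Ap := substT (.const a) x φ

/-- Free variables. -/
def FV : Form n C Ap → Finset ℕ
  | .atom _ => ∅
  | .neg φ => FV φ
  | .and φ ψ => FV φ ∪ FV ψ
  | .box ts φ => FV φ ∪ Finset.univ.biUnion (fun i => match ts i with | Tm.var x => {x} | _ => ∅)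
  | .all y φ => FV φ \ {y}

/-- A sentence (closed formula). -/
def closed (φ : Form n C Ap) : Prop := FV φ = ∅

/-- Universal closure of a formula. -/
def closure (φ : Form n C Ap) : Form n C Ap := ((FV φ).sort (· ≤ ·)).foldr Form.all φ

def size : Form n C Ap → ℕ
  | .atom _ => 1
  | .neg φ => size φ + 1
  | .and φ ψ => size φ + size ψ + 1
  | .box _ φ => size φ + 1
  | .all _ φ => size φ + 1

theorem size_substT (t : Tm C) (x : ℕ) (φ : Form n C Ap) :
    size (substT t x φ) = size φ := by
  induction φ with
  | atom p => rfl
  | neg φ ih => simp [substT, size, ih]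
  | and φ ψ ih1 ih2 => simp [substT, size, ih1, ih2]
  | box ts φ ih => simp [substT, size, ih]
  | all y φ ih => by_cases h : y = x <;> simp [substT, size, h, ih]

/-- Whether a term occurs in a formula. -/
def occursT (t : Tm C) : Form n C Ap → Prop
  | .atom _ => False
  | .neg φ => occursT t φ
  | .and φ ψ => occursT t φ ∨ occursT t ψ
  | .box ts φ => (∃ i, ts i = t) ∨ occursT t φ
  | .all y φ => (t = Tm.var y) ∨ occursT t φ

end Form

/-- A concurrent game structure over a signature ⟨n, C, Ap⟩ (actions = constants). -/
structure CGS (n : ℕ) (C : Type) (Ap : Type) where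
  S : Type
  R : S → (Fin n → C) → S → Prop
  V : Ap → S → Prop

namespace CGS

variable {n : ℕ} {C Ap : Type}

def Serial (G : CGS n C Ap) : Prop := ∀ s d, ∃ t, G.R s d t

def Functional (G : CGS n C Ap) : Prop := ∀ s d t v, G.R s d t → G.R s d v → t = v

end CGS

/-- Satisfaction of (closed) formulas in a CGS. -/
def Sat {n : ℕ} {C Ap : Type} (G : CGS n C Ap) : G.S → Form n C Ap → Prop
  | s, .atom p => G.V p s
  | s, .neg φ => ¬ Sat G s φ
  | s, .and φ ψ => Sat G s φ ∧ Sat G s ψ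
  | s, .box ts φ => ∃ d : Fin n → C, (∀ i, ts i = Tm.const (d i)) ∧ ∃ t, G.R s d t ∧ Sat G t φ
  | s, .all x φ => ∀ a : C, Sat G s (Form.subst a x φ)
termination_by _ φ => Form.size φ
decreasing_by all_goals simp [Form.subst, Form.size_substT, Form.size] <;> omega

/-- Truth of a possibly open formula: truth of its universal closure. -/
def SatC {n : ℕ} {C Ap : Type} (G : CGS n C Ap) (s : G.S) (φ : Form n C Ap) : Prop :=
  Sat G s (Form.closure φ)

/-- Validity in a CGS. -/
def ValidIn {n : ℕ} {C Ap : Type} (G : CGS n C Ap) (φ : Form n C Ap) : Prop :=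
  ∀ s : G.S, SatC G s φ

/-- Propositional evaluation treating atoms, boxes and quantified formulas as atomic. -/
def evalP {n : ℕ} {C Ap : Type} (v : Form n C Ap → Prop) : Form n C Ap → Prop
  | .neg φ => ¬ evalP v φ
  | .and φ ψ => evalP v φ ∧ evalP v ψ
  | .atom p => v (.atom p)
  | .box ts φ => v (.box ts φ)
  | .all x φ => v (.all x φ)

/-- Propositional tautologies. -/
def Taut {n : ℕ} {C Ap : Type} (φ : Form n C Ap) : Prop :=
  ∀ v : Form n C Ap → Prop, evalP v φ

/-- The axiom system of first-order coalition logic. -/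
inductive Deriv {n : ℕ} {C Ap : Type} : Form n C Ap → Prop
  | PC {φ} : Taut φ → Deriv φ
  | K (ts : Fin n → Tm C) (φ ψ) :
      Deriv (Form.iff (.and (.box ts φ) (.box ts ψ)) (.box ts (.and φ ψ)))
  | N (ts : Fin n → Tm C) (φ) :
      Deriv (Form.iff (.neg (.box ts φ)) (.box ts (.neg φ)))
  | E (x : ℕ) (t : Tm C) (φ) : Deriv (Form.imp (.all x φ) (Form.substT t x φ))
  | B (ts : Fin n → Tm C) (x : ℕ) (φ) (h : ∀ i, ts i ≠ Tm.var x) :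
      Deriv (Form.imp (.all x (.box ts φ)) (.box ts (.all x φ)))
  | MP {φ ψ} : Deriv (Form.imp φ ψ) → Deriv φ → Deriv ψ
  | Nec (ts : Fin n → Tm C) {φ} : Deriv φ → Deriv (.box ts φ)
  | Gen {φ ψ} (t : Tm C) (x : ℕ) :
      Deriv (Form.imp φ (Form.substT t x ψ)) → ¬ Form.occursT t φ →
      Deriv (Form.imp φ (.all x ψ))

/-- Derivability from a set of formulas. -/
def DerivFrom {n : ℕ} {C Ap : Type} (X : Set (Form n C Ap)) (φ : Form n C Ap) : Prop :=
  ∃ L : List (Form n C Ap), (∀ ψ ∈ L, ψ ∈ X) ∧ Deriv (L.foldr Form.imp φ)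

def Consistent {n : ℕ} {C Ap : Type} (X : Set (Form n C Ap)) : Prop :=
  ¬ ∃ φ, DerivFrom X φ ∧ DerivFrom X (.neg φ)

/-- A set of sentences. -/
def SentenceSet {n : ℕ} {C Ap : Type} (X : Set (Form n C Ap)) : Prop :=
  ∀ φ ∈ X, Form.closed φ

/-- Maximal consistent set (of sentences). -/
def MCS {n : ℕ} {C Ap : Type} (X : Set (Form n C Ap)) : Prop :=
  Consistent X ∧ ∀ ψ, Form.closed ψ → ψ ∉ X → ¬ Consistent (insert ψ X)

/-- The ∀-property. -/
def AllProp {n : ℕ} {C Ap : Type} (X : Set (Form n C Ap)) : Prop :=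
  ∀ (φ : Form n C Ap) (x : ℕ), Form.FV φ ⊆ {x} →
    ∃ a : C, Form.imp (Form.subst a x φ) (.all x φ) ∈ X

/-- The canonical model. -/
def canonical (n : ℕ) (C Ap : Type) : CGS n C Ap where
  S := {X : Set (Form n C Ap) // SentenceSet X ∧ MCS X ∧ AllProp X}
  R := fun X d Y => ∀ φ, φ ∈ Y.1 → Form.box (fun i => Tm.const (d i)) φ ∈ X.1
  V := fun p X => Form.atom p ∈ X.1

/-- Renaming of constants. -/
def Tm.mapC {C C' : Type} (f : C → C') : Tm C → Tm C'
  | .var x => .var x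
  | .const c => .const (f c)

def Form.mapC {n : ℕ} {C C' Ap : Type} (f : C → C') : Form n C Ap → Form n C' Ap
  | .atom p => .atom p
  | .neg φ => .neg (mapC f φ)
  | .and φ ψ => .and (mapC f φ) (mapC f ψ)
  | .box ts φ => .box (fun i => (ts i).mapC f) (mapC f φ)
  | .all y φ => .all y (mapC f φ)


/-- Coalition logic formulas over two agents. -/
inductive CLForm (Ap : Type) : Type
  | atom : Ap → CLForm Ap
  | neg : CLForm Ap → CLForm Ap
  | and : CLForm Ap → CLForm Ap → CLForm Ap
  | coal : Set (Fin 2) → CLForm Ap → CLForm Ap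

/-- Coalition logic semantics over a two-agent CGS. -/
def SatCL {C Ap : Type} (G : CGS 2 C Ap) : G.S → CLForm Ap → Prop
  | s, .atom p => G.V p s
  | s, .neg φ => ¬ SatCL G s φ
  | s, .and φ ψ => SatCL G s φ ∧ SatCL G s ψ
  | s, .coal Co φ => ∃ f : Fin 2 → C, ∀ g : Fin 2 → C, (∀ i ∈ Co, g i = f i) →
      ∀ t, G.R s g t → SatCL G t φ


/-! ### Auxiliary definitions for the counterexample -/

def CEX.G (b : Bool) (Ap : Type) : CGS 2 Bool Ap where
  S := Bool
  R := fun s d t => t = (s.xor (b.xor (d 0 == d 1)))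
  V := fun _ u => u = true

def CEX.sw (g : Fin 2 → Bool) : Fin 2 → Bool := fun i => if i = 1 then !(g 1) else g 0

lemma CEX.sw_sw (g : Fin 2 → Bool) : CEX.sw (CEX.sw g) = g := by
  funext i
  fin_cases i <;> simp [CEX.sw]

lemma CEX.sw_eq_iff (g f : Fin 2 → Bool) (Co : Set (Fin 2)) :
    (∀ i ∈ Co, CEX.sw g i = CEX.sw f i) ↔ (∀ i ∈ Co, g i = f i) := by
  constructor <;> intro h i hi <;> have := h i hi <;> fin_cases i <;>
    simpa [CEX.sw] using this

lemma CEX.R_sw1 {Ap : Type} (s t : Bool) (g : Fin 2 → Bool) :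
    (CEX.G false Ap).R s (CEX.sw g) t ↔ (CEX.G true Ap).R s g t := by
  simp only [CEX.G, CEX.sw]
  cases g 0 <;> cases g 1 <;> simp

lemma CEX.R_sw2 {Ap : Type} (s t : Bool) (g : Fin 2 → Bool) :
    (CEX.G true Ap).R s (CEX.sw g) t ↔ (CEX.G false Ap).R s g t := by
  simp only [CEX.G, CEX.sw]
  cases g 0 <;> cases g 1 <;> simp

lemma CEX.sw_agree (g f : Fin 2 → Bool) (Co : Set (Fin 2))
    (hg : ∀ i ∈ Co, g i = CEX.sw f i) : ∀ i ∈ Co, CEX.sw g i = f i := by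
  have := (CEX.sw_eq_iff g (CEX.sw f) Co).mpr hg
  rwa [CEX.sw_sw] at this

lemma CEX.satcl_iff {Ap : Type} (φ : CLForm Ap) (x : Bool) :
    SatCL (CEX.G true Ap) x φ ↔ SatCL (CEX.G false Ap) x φ := by
  induction φ generalizing x with
  | atom q => exact Iff.rfl
  | neg φ ih => exact not_congr (ih x)
  | and φ ψ ih1 ih2 => exact and_congr (ih1 x) (ih2 x)
  | coal Co φ ih =>
    simp only [SatCL]
    constructor
    · rintro ⟨f, hf⟩
      refine ⟨CEX.sw f, fun g hg t hR => ?_⟩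
      exact (ih t).mp (hf (CEX.sw g) (CEX.sw_agree g f Co hg) t
        ((CEX.R_sw2 x t g).mpr hR))
    · rintro ⟨f, hf⟩
      refine ⟨CEX.sw f, fun g hg t hR => ?_⟩
      exact (ih t).mpr (hf (CEX.sw g) (CEX.sw_agree g f Co hg) t
        ((CEX.R_sw1 x t g).mpr hR))

/-- no CL formula is equivalent to ∃x⟨x,x⟩¬p. -/
theorem cl_cannot_express {Ap : Type} (p : Ap) :
    ∃ (G₁ G₂ : CGS 2 Bool Ap) (s₁ : G₁.S) (s₂ : G₂.S),
      G₁.Serial ∧ G₁.Functional ∧ G₂.Serial ∧ G₂.Functional ∧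
      (∀ φ : CLForm Ap, SatCL G₁ s₁ φ ↔ SatCL G₂ s₂ φ) ∧
      Sat G₁ s₁ (Form.ex 0 (Form.box (fun _ => Tm.var 0) (Form.neg (Form.atom p)))) ∧
      ¬ Sat G₂ s₂ (Form.ex 0 (Form.box (fun _ => Tm.var 0) (Form.neg (Form.atom p)))) := by
  refine ⟨CEX.G false Ap, CEX.G true Ap, true, true, ?_, ?_, ?_, ?_, ?_, ?_, ?_⟩
  · exact fun s d => ⟨_, rfl⟩
  · exact fun s d t v ht hv => ht.trans hv.symm
  · exact fun s d => ⟨_, rfl⟩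
  · exact fun s d t v ht hv => ht.trans hv.symm
  · exact fun φ => (CEX.satcl_iff φ true).symm
  · -- G₁, true ⊨ ∃x ⟨x,x⟩ ¬p
    unfold CEX.G
    simp only [Form.ex, Sat, Form.subst, Form.substT]
    intro h
    have := h true
    exact this ⟨fun _ => true, fun i => by simp, false, by simp [CEX.G], by simp [Sat, CEX.G]⟩
  · -- G₂, true ⊭ ∃x ⟨x,x⟩ ¬p
    unfold CEX.G
    simp only [Form.ex, Sat, Form.subst, Form.substT]
    intro h
    apply h
    intro a
    rintro ⟨d, hd, t, hR, hsat⟩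
    have h0 : d 0 = a := by have := hd 0; simp at this; exact this.symm
    have h1 : d 1 = a := by have := hd 1; simp at this; exact this.symm
    simp only [CEX.G, h0, h1] at hR
    simp at hR
    subst hR
    exact hsat (by simp [Sat, CEX.G])
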